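/- arXiv:1007.1400 — 2 statements merged into one kernel-verified Lean document; each statement's English description precedes it below -/
import Mathlib

section
/- Let γ : [τ₁,τ₂] → M be a smooth curve and suppose |Ric_{g(τ)}|_{g(τ)} ≤ C₀ and |R_{g(τ)}(x)| ≤ dC₀ for all x, τ. Then the 𝓛-functional of γ satisfies 𝓛(γ) ≥ (e^{−2C₀(τ₂−τ₁)}/(2(√τ₂ − √τ₁))) · ρ_{g(τ₂)}(γ(τ₁), γ(τ₂))² − (2/3) d C₀ (τ₂^{3/2} − τ₁^{3/2}), where ρ_{g(τ₂)} is the Riemannian distance at time τ₂. -/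
open MeasureTheory intervalIntegral

/-- Lower bound for the 𝓛-functional of a smooth curve γ, under the
curvature bounds |Ric| ≤ C₀ (giving the metric comparison used in `hlen`) and
|R| ≤ dC₀. Here `speed τ = |γ̇(τ)|_{g(τ)}`, `R τ = R_{g(τ)}(γ(τ))`, `dist` is the
Riemannian distance ρ_{g(τ₂)}, and the length comparison
ρ_{g(τ₂)}(γ(τ₁), γ(τ₂)) ≤ e^{C₀(τ₂−τ₁)} ∫ speed comes from the metric comparison. -/
theorem L_functional_lower_bound {M : Type*} [PseudoMetricSpace M]
    (d : ℕ) (τ₁ τ₂ C₀ : ℝ)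
    (h0 : 0 ≤ τ₁) (hτ : τ₁ < τ₂) (hC₀ : 0 ≤ C₀)
    (γ : ℝ → M) (speed R : ℝ → ℝ)
    (hspeed_nonneg : ∀ τ ∈ Set.Icc τ₁ τ₂, 0 ≤ speed τ)
    (hspeed_cont : ContinuousOn speed (Set.Icc τ₁ τ₂))
    (hR_cont : ContinuousOn R (Set.Icc τ₁ τ₂))
    (hR : ∀ τ ∈ Set.Icc τ₁ τ₂, |R τ| ≤ (d : ℝ) * C₀)
    (hlen : dist (γ τ₁) (γ τ₂)
      ≤ Real.exp (C₀ * (τ₂ - τ₁)) * ∫ τ in τ₁..τ₂, speed τ) :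
    Real.exp (-2 * C₀ * (τ₂ - τ₁)) / (2 * (Real.sqrt τ₂ - Real.sqrt τ₁))
        * dist (γ τ₁) (γ τ₂) ^ 2
      - (2 / 3) * (d : ℝ) * C₀ * (τ₂ ^ ((3:ℝ)/2) - τ₁ ^ ((3:ℝ)/2))
    ≤ ∫ τ in τ₁..τ₂, Real.sqrt τ * (speed τ ^ 2 + R τ) := by
  have hτle := hτ.le
  set Δ : ℝ := Real.sqrt τ₂ - Real.sqrt τ₁ with hΔdef
  have hΔ : 0 < Δ := sub_pos.2 (Real.sqrt_lt_sqrt h0 hτ)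
  set S : ℝ := ∫ τ in τ₁..τ₂, speed τ with hS
  have hS0 : 0 ≤ S :=
    intervalIntegral.integral_nonneg hτle (fun x hx => hspeed_nonneg x hx)
  set a : ℝ := S / (2 * Δ) with ha
  have ha0 : 0 ≤ a := div_nonneg hS0 (by positivity)
  -- integrability facts
  have hIsp : IntervalIntegrable speed volume τ₁ τ₂ :=
    hspeed_cont.intervalIntegrable_of_Icc hτle
  have hsqrtc : ContinuousOn (fun τ : ℝ => Real.sqrt τ) (Set.Icc τ₁ τ₂) :=
    Real.continuous_sqrt.continuousOn
  have hI1 : IntervalIntegrable (fun τ => Real.sqrt τ * speed τ ^ 2) volume τ₁ τ₂ :=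
    (hsqrtc.mul (hspeed_cont.pow 2)).intervalIntegrable_of_Icc hτle
  have hI2 : IntervalIntegrable (fun τ => Real.sqrt τ * R τ) volume τ₁ τ₂ :=
    (hsqrtc.mul hR_cont).intervalIntegrable_of_Icc hτle
  have hIsq : IntervalIntegrable (fun τ : ℝ => Real.sqrt τ) volume τ₁ τ₂ :=
    hsqrtc.intervalIntegrable_of_Icc hτle
  have hIrpow : IntervalIntegrable (fun τ : ℝ => τ ^ (-(1/2) : ℝ)) volume τ₁ τ₂ :=
    intervalIntegral.intervalIntegrable_rpow' (by norm_num)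
  -- value of the rpow integrals
  have hJ : (∫ τ in τ₁..τ₂, τ ^ (-(1/2) : ℝ)) = 2 * Δ := by
    rw [integral_rpow (Or.inl (by norm_num))]
    rw [hΔdef, Real.sqrt_eq_rpow, Real.sqrt_eq_rpow]
    norm_num
    ring
  have hK : (∫ τ in τ₁..τ₂, Real.sqrt τ)
      = (2/3) * (τ₂ ^ ((3:ℝ)/2) - τ₁ ^ ((3:ℝ)/2)) := by
    have hcongr : Set.EqOn (fun τ : ℝ => Real.sqrt τ) (fun τ : ℝ => τ ^ ((1:ℝ)/2))
        (Set.uIcc τ₁ τ₂) := fun τ _ => Real.sqrt_eq_rpow τ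
    rw [intervalIntegral.integral_congr hcongr, integral_rpow (Or.inl (by norm_num))]
    norm_num
    ring
  -- split the integral
  have hsplit : (∫ τ in τ₁..τ₂, Real.sqrt τ * (speed τ ^ 2 + R τ))
      = (∫ τ in τ₁..τ₂, Real.sqrt τ * speed τ ^ 2)
        + ∫ τ in τ₁..τ₂, Real.sqrt τ * R τ := by
    rw [← intervalIntegral.integral_add hI1 hI2]
    congr 1; ext τ; ring
  -- lower bound for the R part
  have hB : -((2/3) * (d : ℝ) * C₀ * (τ₂ ^ ((3:ℝ)/2) - τ₁ ^ ((3:ℝ)/2)))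
      ≤ ∫ τ in τ₁..τ₂, Real.sqrt τ * R τ := by
    have hmono : (∫ τ in τ₁..τ₂, -((d : ℝ) * C₀) * Real.sqrt τ)
        ≤ ∫ τ in τ₁..τ₂, Real.sqrt τ * R τ := by
      apply intervalIntegral.integral_mono_on hτle (hIsq.const_mul _) hI2
      intro τ hτm
      have h1 : -((d : ℝ) * C₀) ≤ R τ := neg_le_of_abs_le (hR τ hτm)
      have h2 : 0 ≤ Real.sqrt τ := Real.sqrt_nonneg τ
      calc -((d : ℝ) * C₀) * Real.sqrt τ ≤ R τ * Real.sqrt τ :=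
            mul_le_mul_of_nonneg_right h1 h2
        _ = Real.sqrt τ * R τ := by ring
    rw [intervalIntegral.integral_const_mul, hK] at hmono
    linarith
  -- lower bound for the speed part (Cauchy–Schwarz via AM–GM)
  have hA : S ^ 2 / (2 * Δ) ≤ ∫ τ in τ₁..τ₂, Real.sqrt τ * speed τ ^ 2 := by
    have hpt : ∀ τ ∈ Set.Ioc τ₁ τ₂,
        2 * a * speed τ - a ^ 2 * τ ^ (-(1/2) : ℝ) ≤ Real.sqrt τ * speed τ ^ 2 := by
      intro τ hτm
      have hτpos : 0 < τ := lt_of_le_of_lt h0 hτm.1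
      have hsτ : 0 < Real.sqrt τ := Real.sqrt_pos.2 hτpos
      set u : ℝ := Real.sqrt (Real.sqrt τ) with hu
      have hupos : 0 < u := Real.sqrt_pos.2 hsτ
      have hu2 : u ^ 2 = Real.sqrt τ := Real.sq_sqrt hsτ.le
      have hrw : τ ^ (-(1/2) : ℝ) = (Real.sqrt τ)⁻¹ := by
        rw [Real.rpow_neg hτpos.le, ← Real.sqrt_eq_rpow]
      have key := two_mul_le_add_sq (u * speed τ) (a / u)
      have h1 : 2 * (u * speed τ) * (a / u) = 2 * a * speed τ := by
        field_simp
      have h2 : (u * speed τ) ^ 2 = Real.sqrt τ * speed τ ^ 2 := by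
        rw [mul_pow, hu2]
      have h3 : (a / u) ^ 2 = a ^ 2 * (Real.sqrt τ)⁻¹ := by
        rw [div_pow, hu2]; rw [div_eq_mul_inv]
      rw [h1, h2, h3] at key
      rw [hrw]
      linarith
    have hmono : (∫ τ in τ₁..τ₂, (2 * a * speed τ - a ^ 2 * τ ^ (-(1/2) : ℝ)))
        ≤ ∫ τ in τ₁..τ₂, Real.sqrt τ * speed τ ^ 2 := by
      rw [intervalIntegral.integral_of_le hτle, intervalIntegral.integral_of_le hτle]
      apply MeasureTheory.setIntegral_mono_on
      · exact ((hIsp.const_mul (2 * a)).sub (hIrpow.const_mul (a ^ 2))).1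
      · exact hI1.1
      · exact measurableSet_Ioc
      · exact hpt
    rw [intervalIntegral.integral_sub (hIsp.const_mul _) (hIrpow.const_mul _),
      intervalIntegral.integral_const_mul, intervalIntegral.integral_const_mul,
      hJ, ← hS] at hmono
    have hval : 2 * a * S - a ^ 2 * (2 * Δ) = S ^ 2 / (2 * Δ) := by
      rw [ha]; field_simp; ring
    rw [← hval]; exact hmono
  -- combine with the length comparison
  have hdS : Real.exp (-2 * C₀ * (τ₂ - τ₁)) * dist (γ τ₁) (γ τ₂) ^ 2 ≤ S ^ 2 := by
    have hd2 : dist (γ τ₁) (γ τ₂) ^ 2 ≤ (Real.exp (C₀ * (τ₂ - τ₁)) * S) ^ 2 :=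
      pow_le_pow_left₀ dist_nonneg hlen 2
    have hE : Real.exp (-2 * C₀ * (τ₂ - τ₁)) * Real.exp (C₀ * (τ₂ - τ₁)) ^ 2 = 1 := by
      rw [sq, ← Real.exp_add, ← Real.exp_add,
        show -2 * C₀ * (τ₂ - τ₁) + (C₀ * (τ₂ - τ₁) + C₀ * (τ₂ - τ₁)) = 0 by ring,
        Real.exp_zero]
    have hEpos : (0:ℝ) < Real.exp (-2 * C₀ * (τ₂ - τ₁)) := Real.exp_pos _
    calc Real.exp (-2 * C₀ * (τ₂ - τ₁)) * dist (γ τ₁) (γ τ₂) ^ 2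
        ≤ Real.exp (-2 * C₀ * (τ₂ - τ₁)) * (Real.exp (C₀ * (τ₂ - τ₁)) * S) ^ 2 :=
          mul_le_mul_of_nonneg_left hd2 hEpos.le
      _ = (Real.exp (-2 * C₀ * (τ₂ - τ₁)) * Real.exp (C₀ * (τ₂ - τ₁)) ^ 2) * S ^ 2 := by
          ring
      _ = S ^ 2 := by rw [hE, one_mul]
    done
  have hfinal : Real.exp (-2 * C₀ * (τ₂ - τ₁)) / (2 * Δ) * dist (γ τ₁) (γ τ₂) ^ 2
      ≤ S ^ 2 / (2 * Δ) := by
    rw [div_mul_eq_mul_div, div_le_div_iff_of_pos_right (by positivity)]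
    exact hdS
  rw [hsplit]
  linarith
end

section
/- Let W be the optimal transportation cost between probability measures μ, ν on a Polish space M×M with a lower semicontinuous cost c bounded below by a constant. If for every pair (x,y) there exist coupled random variables (X^x_t, Y^y_t) with the correct marginal laws (heat flows of δ_x, δ_y) such that E[c(X^x_t, Y^y_t)] ≤ Φ(x,y) for a measurable function Φ, and π is an optimal coupling of μ and ν for cost Φ, then W(μ_t, ν_t) ≤ ∫ Φ dπ, where μ_t, ν_t are the respective pushed-forward marginal laws at time t. -/
open MeasureTheory

lemma my_map_bind {α β γ : Type*} [MeasurableSpace α] [MeasurableSpace β] [MeasurableSpace γ]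
    (m : Measure α) (f : α → Measure β) (g : β → γ) (hf : Measurable f) (hg : Measurable g) :
    (m.bind f).map g = m.bind (fun a => (f a).map g) := by
  have hfm : Measurable fun a => (f a).map g := (Measure.measurable_map g hg).comp hf
  ext s hs
  rw [Measure.map_apply hg hs, Measure.bind_apply (hg hs) hf.aemeasurable,
    Measure.bind_apply hs hfm.aemeasurable]
  exact lintegral_congr fun a => (Measure.map_apply hg hs).symm

lemma my_bind_map {α β γ : Type*} [MeasurableSpace α] [MeasurableSpace β] [MeasurableSpace γ]
    (m : Measure α) (g : α → β) (f : β → Measure γ) (hg : Measurable g) (hf : Measurable f) :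
    (m.map g).bind f = m.bind (f ∘ g) := by
  ext s hs
  rw [Measure.bind_apply hs hf.aemeasurable, Measure.bind_apply hs (hf.comp hg).aemeasurable,
    lintegral_map (f := fun b => f b s) ((Measure.measurable_coe hs).comp hf) hg]
  rfl

/-- Abstract transport argument: if for every pair (x,y) there is a
coupling κ(x,y) of the evolved measures P x and Q y with ∫ c dκ(x,y) ≤ Φ(x,y),
and π is a coupling of μ and ν, then the transportation cost between the evolved
measures μ.bind P and ν.bind Q is at most ∫ Φ dπ. -/
theorem transport_cost_contraction {M : Type*} [MeasurableSpace M]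
    (c Φ : M × M → ℝ) (Cl : ℝ)
    (hc : Measurable c) (hΦ : Measurable Φ)
    (hlb : ∀ p, Cl ≤ c p)
    (P Q : M → Measure M) (hP : Measurable P) (hQ : Measurable Q)
    (hPprob : ∀ x, IsProbabilityMeasure (P x))
    (hQprob : ∀ x, IsProbabilityMeasure (Q x))
    (μ ν : Measure M) [IsProbabilityMeasure μ] [IsProbabilityMeasure ν]
    (κ : M × M → Measure (M × M)) (hκ : Measurable κ)
    (hκprob : ∀ p, IsProbabilityMeasure (κ p))
    (hκ1 : ∀ p : M × M, (κ p).map Prod.fst = P p.1)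
    (hκ2 : ∀ p : M × M, (κ p).map Prod.snd = Q p.2)
    (hcint : ∀ p, Integrable c (κ p))
    (hcost : ∀ p, (∫ q, c q ∂(κ p)) ≤ Φ p)
    (π : Measure (M × M)) [IsProbabilityMeasure π]
    (hπ1 : π.map Prod.fst = μ) (hπ2 : π.map Prod.snd = ν)
    (hΦint : Integrable Φ π) :
    sInf {r : ℝ | ∃ π' : Measure (M × M), IsProbabilityMeasure π' ∧
        π'.map Prod.fst = μ.bind P ∧ π'.map Prod.snd = ν.bind Q ∧
        r = ∫ q, c q ∂π'}
      ≤ ∫ p, Φ p ∂π := by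
  set π' : Measure (M × M) := π.bind κ with hπ'def
  -- π' is a probability measure
  have hπ'prob : IsProbabilityMeasure π' := by
    constructor
    rw [hπ'def, Measure.bind_apply MeasurableSet.univ hκ.aemeasurable]
    simp [fun p => (hκprob p).measure_univ]
  -- marginals
  have hm1 : π'.map Prod.fst = μ.bind P := by
    rw [hπ'def, my_map_bind π κ Prod.fst hκ measurable_fst]
    have : (fun p => (κ p).map Prod.fst) = fun p : M × M => P p.1 := funext hκ1
    rw [this, ← hπ1, my_bind_map π Prod.fst P measurable_fst hP]
    rfl
  have hm2 : π'.map Prod.snd = ν.bind Q := by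
    rw [hπ'def, my_map_bind π κ Prod.snd hκ measurable_snd]
    have : (fun p => (κ p).map Prod.snd) = fun p : M × M => Q p.2 := funext hκ2
    rw [this, ← hπ2, my_bind_map π Prod.snd Q measurable_snd hQ]
    rfl
  -- Φ p ≥ Cl
  have hΦlb : ∀ p, Cl ≤ Φ p := fun p => by
    have h1 : (∫ q, (Cl : ℝ) ∂κ p) ≤ ∫ q, c q ∂κ p :=
      integral_mono (integrable_const Cl) (hcint p) hlb
    have := hκprob p
    rw [integral_const, probReal_univ, one_smul] at h1
    exact h1.trans (hcost p)
  -- pointwise integral of c - Cl against κ p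
  have hsub : ∀ p, (∫ q, (c q - Cl) ∂κ p) = (∫ q, c q ∂κ p) - Cl := fun p => by
    have := hκprob p
    rw [integral_sub (hcint p) (integrable_const Cl), integral_const, probReal_univ,
      one_smul]
  have hg_meas : Measurable fun q : M × M => c q - Cl := hc.sub measurable_const
  have hg_nonneg : ∀ q, 0 ≤ c q - Cl := fun q => sub_nonneg.2 (hlb q)
  -- key lintegral bound
  have hIΦ : Integrable (fun p => Φ p - Cl) π := hΦint.sub (integrable_const Cl)
  have hIΦnn : 0 ≤ᵐ[π] fun p => Φ p - Cl :=
    Filter.Eventually.of_forall fun p => sub_nonneg.2 (hΦlb p)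
  have hlint : (∫⁻ q, ENNReal.ofReal (c q - Cl) ∂π')
      ≤ ENNReal.ofReal (∫ p, (Φ p - Cl) ∂π) := by
    rw [hπ'def, Measure.lintegral_bind (f := fun q => ENNReal.ofReal (c q - Cl)) hκ.aemeasurable
      (ENNReal.measurable_ofReal.comp hg_meas).aemeasurable]
    calc ∫⁻ p, ∫⁻ q, ENNReal.ofReal (c q - Cl) ∂κ p ∂π
        = ∫⁻ p, ENNReal.ofReal (∫ q, (c q - Cl) ∂κ p) ∂π := by
          refine lintegral_congr fun p => ?_
          exact (ofReal_integral_eq_lintegral_ofReal ((hcint p).sub (integrable_const Cl))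
            (Filter.Eventually.of_forall hg_nonneg)).symm
      _ ≤ ∫⁻ p, ENNReal.ofReal (Φ p - Cl) ∂π := by
          refine lintegral_mono fun p => ENNReal.ofReal_le_ofReal ?_
          rw [hsub p]; linarith [hcost p]
      _ = ENNReal.ofReal (∫ p, (Φ p - Cl) ∂π) :=
          (ofReal_integral_eq_lintegral_ofReal hIΦ hIΦnn).symm
  -- integrability of c w.r.t. π'
  have hgint : Integrable (fun q => c q - Cl) π' := by
    refine ⟨hg_meas.aestronglyMeasurable, ?_⟩
    rw [hasFiniteIntegral_iff_ofReal (Filter.Eventually.of_forall hg_nonneg)]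
    exact lt_of_le_of_lt hlint ENNReal.ofReal_lt_top
  have hcint' : Integrable c π' := by
    have h := hgint.add (integrable_const Cl)
    exact h.congr (Filter.Eventually.of_forall fun q => by simp)
  -- cost bound for π'
  have hcost' : (∫ q, c q ∂π') ≤ ∫ p, Φ p ∂π := by
    have h1 : (∫ q, (c q - Cl) ∂π') = (∫⁻ q, ENNReal.ofReal (c q - Cl) ∂π').toReal :=
      integral_eq_lintegral_of_nonneg_ae (Filter.Eventually.of_forall hg_nonneg)
        hg_meas.aestronglyMeasurable
    have h2 : (∫⁻ q, ENNReal.ofReal (c q - Cl) ∂π').toReal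
        ≤ (ENNReal.ofReal (∫ p, (Φ p - Cl) ∂π)).toReal :=
      ENNReal.toReal_mono ENNReal.ofReal_ne_top hlint
    have h3 : (ENNReal.ofReal (∫ p, (Φ p - Cl) ∂π)).toReal = ∫ p, (Φ p - Cl) ∂π :=
      ENNReal.toReal_ofReal (integral_nonneg_of_ae hIΦnn)
    have h4 : (∫ q, (c q - Cl) ∂π') = (∫ q, c q ∂π') - Cl := by
      rw [integral_sub hcint' (integrable_const Cl), integral_const, probReal_univ,
        one_smul]
    have h5 : (∫ p, (Φ p - Cl) ∂π) = (∫ p, Φ p ∂π) - Cl := by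
      rw [integral_sub hΦint (integrable_const Cl), integral_const, probReal_univ,
        one_smul]
    have := h1 ▸ (h2.trans_eq h3)
    rw [h4, h5] at this
    linarith
  -- membership and bounded below
  have hmem : (∫ q, c q ∂π') ∈ {r : ℝ | ∃ π'' : Measure (M × M), IsProbabilityMeasure π'' ∧
      π''.map Prod.fst = μ.bind P ∧ π''.map Prod.snd = ν.bind Q ∧ r = ∫ q, c q ∂π''} :=
    ⟨π', hπ'prob, hm1, hm2, rfl⟩
  have hbdd : BddBelow {r : ℝ | ∃ π'' : Measure (M × M), IsProbabilityMeasure π'' ∧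
      π''.map Prod.fst = μ.bind P ∧ π''.map Prod.snd = ν.bind Q ∧ r = ∫ q, c q ∂π''} := by
    refine ⟨min Cl 0, fun r hr => ?_⟩
    obtain ⟨π'', hprob, _, _, rfl⟩ := hr
    by_cases h : Integrable c π''
    · have h1 : (∫ q, (Cl : ℝ) ∂π'') ≤ ∫ q, c q ∂π'' := integral_mono (integrable_const Cl) h hlb
      rw [integral_const, probReal_univ, one_smul] at h1
      exact (min_le_left _ _).trans h1
    · rw [integral_undef h]
      exact min_le_right _ _
  exact (csInf_le hbdd hmem).trans hcost'
end
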